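/- Let f : ℝ^D → ℝ be twice continuously differentiable with γ_H-Lipschitz Hessian, let X be a finite set of points in ℝ^D, let xᵢ ∈ X, and suppose each point xⱼ ∈ X carries a noisy value zⱼ = f(xⱼ) + εⱼ with |εⱼ| ≤ ε̄. Then ∇f(xᵢ) belongs to the noisy gradient set { g ∈ ℝ^D : for every xⱼ ∈ X \ {xᵢ}, both ⟨g, uᵢⱼ⟩ ≤ g̃ᵢⱼ + (1/2)·μᵢⱼ·‖H(xᵢ)‖ + (1/6)·μᵢⱼ²·γ_H + 2ε̄/μᵢⱼ and −⟨g, uᵢⱼ⟩ ≤ −g̃ᵢⱼ + (1/2)·μᵢⱼ·‖H(xᵢ)‖ + (1/6)·μᵢⱼ²·γ_H + 2ε̄/μᵢⱼ }, where g̃ᵢⱼ = (zⱼ − zᵢ)/μᵢⱼ. -/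

import Mathlib

set_option maxHeartbeats 800000

open Set

lemma taylor2_bound {E : Type*} [NormedAddCommGroup E] [NormedSpace ℝ E]
    (f : E → ℝ) (hf : ContDiff ℝ 2 f) (γH : ℝ)
    (hLip : ∀ x₁ x₂ : E, ‖iteratedFDeriv ℝ 2 f x₁ - iteratedFDeriv ℝ 2 f x₂‖ ≤ γH * ‖x₁ - x₂‖)
    (x v : E) :
    |f (x + v) - f x - fderiv ℝ f x v - (1/2) * iteratedFDeriv ℝ 2 f x ![v, v]|
      ≤ γH / 6 * ‖v‖ ^ 3 := by
  have hf1 : Differentiable ℝ f := hf.differentiable two_ne_zero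
  have hdf : ContDiff ℝ 1 (fderiv ℝ f) := hf.fderiv_right (le_refl 2)
  have hdf1 : Differentiable ℝ (fderiv ℝ f) := hdf.differentiable one_ne_zero
  set H : E → (E →L[ℝ] E →L[ℝ] ℝ) := fderiv ℝ (fderiv ℝ f) with hHdef
  have hH : ∀ a : E, iteratedFDeriv ℝ 2 f a ![v, v] = H a v v := by
    intro a
    rw [iteratedFDeriv_two_apply]
    simp
    rfl
  have hc : ∀ t : ℝ, HasDerivAt (fun t : ℝ => x + t • v) v t := by
    intro t
    simpa using ((hasDerivAt_id t).smul_const v).const_add x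
  have hA : ∀ t : ℝ, HasDerivAt (fun t : ℝ => f (x + t • v))
      (fderiv ℝ f (x + t • v) v) t := by
    intro t
    exact (hf1 _).hasFDerivAt.comp_hasDerivAt t (hc t)
  have hB : ∀ t : ℝ, HasDerivAt (fun t : ℝ => fderiv ℝ f (x + t • v) v)
      (H (x + t • v) v v) t := by
    intro t
    have h1 : HasDerivAt (fun t : ℝ => fderiv ℝ f (x + t • v)) (H (x + t • v) v) t :=
      (hdf1 _).hasFDerivAt.comp_hasDerivAt t (hc t)
    have h2 := ((ContinuousLinearMap.apply ℝ ℝ v).hasFDerivAt).comp_hasDerivAt t h1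
    exact h2
  set q : ℝ := H x v v with hq
  set φ : ℝ → ℝ := fun t => fderiv ℝ f (x + t • v) v - fderiv ℝ f x v - t * q with hφdef
  have hφ : ∀ t : ℝ, HasDerivAt φ (H (x + t • v) v v - q) t := by
    intro t
    exact ((hB t).sub_const (fderiv ℝ f x v)).sub (hasDerivAt_mul_const q)
  set ψ : ℝ → ℝ := fun t => f (x + t • v) - f x - t * (fderiv ℝ f x v) - t ^ 2 / 2 * q
    with hψdef
  have hψ : ∀ t : ℝ, HasDerivAt ψ (φ t) t := by
    intro t
    have h3 : HasDerivAt (fun t : ℝ => t ^ 2 / 2 * q) (t * q) t := by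
      have := ((hasDerivAt_pow 2 t).div_const 2).mul_const q
      exact this.congr_deriv (by norm_num)
    have := (((hA t).sub_const (f x)).sub (hasDerivAt_mul_const (fderiv ℝ f x v))).sub h3
    exact this
  -- key Hessian bound
  have hkey : ∀ a : E, |H a v v - q| ≤ γH * ‖a - x‖ * (‖v‖ * ‖v‖) := by
    intro a
    have h4 : H a v v - q = (iteratedFDeriv ℝ 2 f a - iteratedFDeriv ℝ 2 f x) ![v, v] := by
      rw [ContinuousMultilinearMap.sub_apply, hH, hH, hq]
    rw [h4]
    calc |(iteratedFDeriv ℝ 2 f a - iteratedFDeriv ℝ 2 f x) ![v, v]|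
        ≤ ‖iteratedFDeriv ℝ 2 f a - iteratedFDeriv ℝ 2 f x‖ * ∏ i, ‖(![v, v]) i‖ :=
          (iteratedFDeriv ℝ 2 f a - iteratedFDeriv ℝ 2 f x).le_opNorm ![v, v]
      _ ≤ γH * ‖a - x‖ * (‖v‖ * ‖v‖) := by
          rw [Fin.prod_univ_two]
          simp only [Matrix.cons_val_zero, Matrix.cons_val_one, Matrix.head_cons]
          have := hLip a x
          have h5 : (0:ℝ) ≤ ‖v‖ * ‖v‖ := mul_nonneg (norm_nonneg _) (norm_nonneg _)
          exact mul_le_mul_of_nonneg_right this h5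
  -- first fencing: |φ t| ≤ γH ‖v‖³ t²/2 on [0,1]
  have step1 : ∀ t ∈ Icc (0:ℝ) 1, |φ t| ≤ γH * ‖v‖ ^ 3 * t ^ 2 / 2 := by
    have := image_norm_le_of_norm_deriv_right_le_deriv_boundary
      (f := φ) (f' := fun t => H (x + t • v) v v - q) (a := 0) (b := 1)
      (fun t _ => (hφ t).continuousAt.continuousWithinAt)
      (fun t _ => (hφ t).hasDerivWithinAt.mono (by intro s hs; exact hs : Ici t ⊆ Ici t))
      (B := fun t => γH * ‖v‖ ^ 3 * t ^ 2 / 2) (B' := fun t => γH * ‖v‖ ^ 3 * t)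
      (by simp [hφdef])
      (fun t => by
        have := ((hasDerivAt_pow 2 t).const_mul (γH * ‖v‖ ^ 3)).div_const 2
        exact this.congr_deriv (by norm_num; ring))
      ?_
    · intro t ht
      simpa [Real.norm_eq_abs] using this ht
    · intro t ht
      have h6 := hkey (x + t • v)
      have h7 : ‖x + t • v - x‖ = t * ‖v‖ := by
        simp [norm_smul, Real.norm_eq_abs, abs_of_nonneg ht.1]
      rw [h7] at h6
      calc ‖H (x + t • v) v v - q‖ = |H (x + t • v) v v - q| := rfl
        _ ≤ γH * (t * ‖v‖) * (‖v‖ * ‖v‖) := h6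
        _ = γH * ‖v‖ ^ 3 * t := by ring
  -- second fencing
  have step2 : ∀ t ∈ Icc (0:ℝ) 1, |ψ t| ≤ γH * ‖v‖ ^ 3 * t ^ 3 / 6 := by
    have := image_norm_le_of_norm_deriv_right_le_deriv_boundary
      (f := ψ) (f' := φ) (a := 0) (b := 1)
      (fun t _ => (hψ t).continuousAt.continuousWithinAt)
      (fun t _ => (hψ t).hasDerivWithinAt)
      (B := fun t => γH * ‖v‖ ^ 3 * t ^ 3 / 6) (B' := fun t => γH * ‖v‖ ^ 3 * t ^ 2 / 2)
      (by simp [hψdef])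
      (fun t => by
        have := ((hasDerivAt_pow 3 t).const_mul (γH * ‖v‖ ^ 3)).div_const 6
        exact this.congr_deriv (by norm_num; ring))
      (fun t ht => by
        simpa [Real.norm_eq_abs] using step1 t (Ico_subset_Icc_self ht))
    intro t ht
    simpa [Real.norm_eq_abs] using this ht
  have h9 := step2 1 ⟨zero_le_one, le_rfl⟩
  have h10 : ψ 1 = f (x + v) - f x - fderiv ℝ f x v
      - (1/2) * iteratedFDeriv ℝ 2 f x ![v, v] := by
    simp only [hψdef, one_smul, one_pow, one_mul]
    rw [hH x, hq]
  rw [h10] at h9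
  exact h9.trans (le_of_eq (by ring))

/-- The true gradient belongs to the noisy polytopic gradient set. -/
theorem sage_gradient_in_polytope_noisy
    {D : ℕ} (hD : 1 ≤ D)
    (f : EuclideanSpace ℝ (Fin D) → ℝ)
    (hf : ContDiff ℝ 2 f)
    (γH : ℝ) (hγH : 0 ≤ γH)
    (hLip : ∀ x₁ x₂ : EuclideanSpace ℝ (Fin D),
      ‖iteratedFDeriv ℝ 2 f x₁ - iteratedFDeriv ℝ 2 f x₂‖ ≤ γH * ‖x₁ - x₂‖)
    (X : Finset (EuclideanSpace ℝ (Fin D)))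
    (xi : EuclideanSpace ℝ (Fin D)) (hxi : xi ∈ X)
    (z : EuclideanSpace ℝ (Fin D) → ℝ) (εbar : ℝ) (hεbar : 0 ≤ εbar)
    (hz : ∀ xj ∈ X, |z xj - f xj| ≤ εbar) :
    gradient f xi ∈
      { g : EuclideanSpace ℝ (Fin D) |
        ∀ xj ∈ X, xj ≠ xi →
          (inner ℝ g ((‖xj - xi‖)⁻¹ • (xj - xi)) : ℝ) ≤
              (z xj - z xi) / ‖xj - xi‖ +
                (1 / 2) * ‖xj - xi‖ * ‖iteratedFDeriv ℝ 2 f xi‖ +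
                (1 / 6) * ‖xj - xi‖ ^ 2 * γH + 2 * εbar / ‖xj - xi‖ ∧
          -(inner ℝ g ((‖xj - xi‖)⁻¹ • (xj - xi)) : ℝ) ≤
              -((z xj - z xi) / ‖xj - xi‖) +
                (1 / 2) * ‖xj - xi‖ * ‖iteratedFDeriv ℝ 2 f xi‖ +
                (1 / 6) * ‖xj - xi‖ ^ 2 * γH + 2 * εbar / ‖xj - xi‖ } := by
  intro xj hxj hne
  set v : EuclideanSpace ℝ (Fin D) := xj - xi with hv
  set μ : ℝ := ‖v‖ with hμdef
  have hμ : 0 < μ := norm_pos_iff.mpr (sub_ne_zero.mpr hne)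
  have hxe : xi + v = xj := by rw [hv]; abel
  have hT := taylor2_bound f hf γH hLip xi v
  rw [hxe] at hT
  set K : ℝ := ‖iteratedFDeriv ℝ 2 f xi‖ with hK
  have hK0 : 0 ≤ K := norm_nonneg _
  set q : ℝ := iteratedFDeriv ℝ 2 f xi ![v, v] with hq
  have hQ : |q| ≤ K * (μ * μ) := by
    calc |q| ≤ K * ∏ i, ‖(![v, v]) i‖ :=
          (iteratedFDeriv ℝ 2 f xi).le_opNorm ![v, v]
      _ = K * (μ * μ) := by
          rw [Fin.prod_univ_two]
          simp
          exact Or.inl rfl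
  set F : ℝ := fderiv ℝ f xi v with hF
  have hinner : (inner ℝ (gradient f xi) ((‖xj - xi‖)⁻¹ • (xj - xi)) : ℝ) = μ⁻¹ * F := by
    rw [real_inner_smul_right]
    congr 1
    rw [hF, gradient]
    exact InnerProductSpace.toDual_symm_apply
  have hzj := hz xj hxj
  have hzi := hz xi hxi
  obtain ⟨hT1, hT2⟩ := abs_le.mp hT
  obtain ⟨hQ1, hQ2⟩ := abs_le.mp hQ
  obtain ⟨hj1, hj2⟩ := abs_le.mp hzj
  obtain ⟨hi1, hi2⟩ := abs_le.mp hzi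
  have hb1 : F ≤ (z xj - z xi) + (1/2) * μ^2 * K + (1/6) * μ^3 * γH + 2 * εbar := by
    nlinarith
  have hb2 : -F ≤ -(z xj - z xi) + (1/2) * μ^2 * K + (1/6) * μ^3 * γH + 2 * εbar := by
    nlinarith
  have hrw : ∀ c : ℝ, μ⁻¹ * (c + (1/2) * μ^2 * K + (1/6) * μ^3 * γH + 2 * εbar)
      = c / μ + (1/2) * μ * K + (1/6) * μ^2 * γH + 2 * εbar / μ := by
    intro c
    field_simp
  constructor
  · rw [hinner]
    calc μ⁻¹ * F ≤ μ⁻¹ * ((z xj - z xi) + (1/2) * μ^2 * K + (1/6) * μ^3 * γH + 2 * εbar) :=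
          mul_le_mul_of_nonneg_left hb1 (by positivity)
      _ = (z xj - z xi) / μ + (1/2) * μ * K + (1/6) * μ^2 * γH + 2 * εbar / μ := hrw _
      _ = (z xj - z xi) / ‖xj - xi‖ + 1 / 2 * ‖xj - xi‖ * K + 1 / 6 * ‖xj - xi‖ ^ 2 * γH
            + 2 * εbar / ‖xj - xi‖ := by rw [hμdef, hv]
  · rw [hinner]
    calc -(μ⁻¹ * F) = μ⁻¹ * (-F) := by ring
      _ ≤ μ⁻¹ * (-(z xj - z xi) + (1/2) * μ^2 * K + (1/6) * μ^3 * γH + 2 * εbar) :=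
          mul_le_mul_of_nonneg_left hb2 (by positivity)
      _ = -(z xj - z xi) / μ + (1/2) * μ * K + (1/6) * μ^2 * γH + 2 * εbar / μ := hrw _
      _ = -((z xj - z xi) / μ) + 1 / 2 * μ * K + 1 / 6 * μ ^ 2 * γH + 2 * εbar / μ := by
          ring
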